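/- arXiv:2601.07989 — 2 statements merged into one kernel-verified Lean document; each statement's English description precedes it below -/
import Mathlib

section
/- Let P_{UV} and Q_{UV} be pmfs on the product 𝒰×𝒱 of two finite alphabets with Q_{UV}(u,v) > 0 for all (u,v). Then min{ D(π_{UV} ‖ Q_{UV}) : π_{UV} a pmf on 𝒰×𝒱 with marginals π_U = P_U and π_V = P_V } ≥ D(P_V ‖ Q_V), and equality holds if and only if Σ_v P_V(v) Q_{U|V}(u|v) = P_U(u) for every u ∈ 𝒰, where Q_{U|V}(u|v) = Q_{UV}(u,v)/Q_V(v). -/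
/-- Base-2 Kullback–Leibler divergence between two pmfs on a finite alphabet. -/
noncomputable def klDiv2 {A : Type} [Fintype A] (p q : A → ℝ) : ℝ :=
  ∑ a, p a * Real.logb 2 (p a / q a)

/-- `p` is a probability mass function on the finite alphabet `A`. -/
def IsPMF {A : Type} [Fintype A] (p : A → ℝ) : Prop :=
  (∀ a, 0 ≤ p a) ∧ ∑ a, p a = 1

/-- `𝒰`-marginal of a joint pmf on `U × V`. -/
noncomputable def margU {U V : Type} [Fintype U] [Fintype V] (p : U × V → ℝ) (u : U) : ℝ :=
  ∑ v, p (u, v)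

/-- `𝒱`-marginal of a joint pmf on `U × V`. -/
noncomputable def margV {U V : Type} [Fintype U] [Fintype V] (p : U × V → ℝ) (v : V) : ℝ :=
  ∑ u, p (u, v)

/-- Minimum of `D(π‖Q)` over all pmfs `π` on `U × V` with prescribed marginals. -/
noncomputable def minDivMarg {U V : Type} [Fintype U] [Fintype V]
    (Q : U × V → ℝ) (pU : U → ℝ) (pV : V → ℝ) : ℝ :=
  sInf {d | ∃ π : U × V → ℝ, IsPMF π ∧
    (∀ u, margU π u = pU u) ∧ (∀ v, margV π v = pV v) ∧ d = klDiv2 π Q}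


section Helpers
open Real Finset


/-- Basic: log x ≤ x - 1 with equality iff x = 1. -/
lemma log_le_sub_one_iff {x : ℝ} (hx : 0 < x) :
    Real.log x ≤ x - 1 ∧ (Real.log x = x - 1 ↔ x = 1) := by
  refine ⟨Real.log_le_sub_one_of_pos hx, ⟨fun h => ?_, fun h => by simp [h]⟩⟩
  by_contra hne
  exact absurd h (ne_of_lt (Real.log_lt_sub_one_of_pos hx hne))

/-- Pointwise Gibbs: c - d ≤ c log(c/d), equality iff c = d. -/
lemma mul_log_div_ge {c d : ℝ} (hc : 0 ≤ c) (hd : 0 < d) :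
    c - d ≤ c * Real.log (c / d) ∧ (c * Real.log (c / d) = c - d ↔ c = d) := by
  rcases eq_or_lt_of_le hc with h | h
  · subst h
    constructor
    · simp; linarith
    · simp [eq_comm, sub_eq_iff_eq_add, hd.ne']
  · have hdc : 0 < d / c := by positivity
    obtain ⟨h1, h2⟩ := log_le_sub_one_iff hdc
    have hlog : Real.log (c / d) = - Real.log (d / c) := by
      rw [← Real.log_inv, inv_div]
    constructor
    · rw [hlog]
      nlinarith [mul_le_mul_of_nonneg_left h1 (le_of_lt h), mul_div_cancel₀ d (ne_of_gt h)]
    · rw [hlog]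
      constructor
      · intro heq
        have : Real.log (d / c) = d / c - 1 := by
          field_simp at heq ⊢
          nlinarith [mul_div_cancel₀ d (ne_of_gt h)]
        have := h2.1 this
        field_simp at this
        linarith
      · intro heq
        subst heq
        rw [div_self (ne_of_gt h)]
        simp

/-- Log-sum inequality with equality case. -/
lemma logSum {U : Type} [Fintype U] (a b : U → ℝ) (ha : ∀ u, 0 ≤ a u) (hb : ∀ u, 0 < b u) :
    (∑ u, a u) * Real.log ((∑ u, a u) / (∑ u, b u)) ≤ ∑ u, a u * Real.log (a u / b u) ∧
    ((∑ u, a u * Real.log (a u / b u)) = (∑ u, a u) * Real.log ((∑ u, a u) / (∑ u, b u)) ↔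
      ∀ u, a u = ((∑ u, a u) / (∑ u, b u)) * b u) := by
  set s := ∑ u, a u with hs
  set t := ∑ u, b u with ht
  have hs0 : 0 ≤ s := Finset.sum_nonneg fun u _ => ha u
  rcases eq_or_lt_of_le hs0 with hz | hpos
  · -- s = 0, hence all a u = 0
    have hall : ∀ u ∈ Finset.univ, a u = 0 := by
      intro u _
      exact (Finset.sum_eq_zero_iff_of_nonneg (fun u _ => ha u)).1 hz.symm u (Finset.mem_univ u)
    have h1 : ∑ u, a u * Real.log (a u / b u) = 0 :=
      Finset.sum_eq_zero fun u hu => by rw [hall u hu]; ring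
    rw [h1, ← hz]
    constructor
    · simp
    · constructor
      · intro _ u
        rw [hall u (Finset.mem_univ u)]
        simp
      · intro _; simp
  · -- s > 0; then univ nonempty, t > 0
    have hne : (Finset.univ : Finset U).Nonempty := by
      rcases isEmpty_or_nonempty U with h | h
      · exfalso; rw [hs, Finset.univ_eq_empty, Finset.sum_empty] at hpos; exact lt_irrefl _ hpos
      · exact Finset.univ_nonempty
    have htpos : 0 < t := Finset.sum_pos (fun u _ => hb u) hne
    set r := s / t with hr
    have hrpos : 0 < r := div_pos hpos htpos
    -- per-term decomposition
    have hdecomp : ∀ u, a u * Real.log (a u / b u)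
        = a u * Real.log (a u / (r * b u)) + a u * Real.log r := by
      intro u
      rcases eq_or_lt_of_le (ha u) with h0 | h0
      · rw [← h0]; ring
      · rw [← mul_add, ← Real.log_mul (ne_of_gt (div_pos h0 (mul_pos hrpos (hb u)))) (ne_of_gt hrpos)]
        congr 2
        field_simp [(hb u).ne', hrpos.ne']
    have hsum1 : ∑ u, a u * Real.log (a u / b u)
        = (∑ u, a u * Real.log (a u / (r * b u))) + s * Real.log r := by
      have h1 : ∑ u, a u * Real.log (a u / b u)
          = ∑ u, (a u * Real.log (a u / (r * b u)) + a u * Real.log r) :=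
        Finset.sum_congr rfl fun u _ => hdecomp u
      rw [h1, Finset.sum_add_distrib, ← Finset.sum_mul, ← hs]
    have hterm : ∀ u ∈ Finset.univ, a u - r * b u ≤ a u * Real.log (a u / (r * b u)) :=
      fun u _ => (mul_log_div_ge (ha u) (mul_pos hrpos (hb u))).1
    have hsumdiff : ∑ u, (a u - r * b u) = 0 := by
      rw [Finset.sum_sub_distrib, ← Finset.mul_sum, ← hs, ← ht, hr]
      field_simp
      ring
    have hge : 0 ≤ ∑ u, a u * Real.log (a u / (r * b u)) := by
      rw [← hsumdiff]
      exact Finset.sum_le_sum hterm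
    constructor
    · rw [hsum1]; linarith
    · rw [hsum1]
      constructor
      · intro heq
        have h0 : ∑ u, a u * Real.log (a u / (r * b u)) = 0 := by linarith
        rw [← hsumdiff] at h0
        have := (Finset.sum_eq_sum_iff_of_le hterm).1 h0.symm
        intro u
        exact ((mul_log_div_ge (ha u) (mul_pos hrpos (hb u))).2.1
          (this u (Finset.mem_univ u)).symm)
      · intro hcond
        have h0 : ∀ u ∈ Finset.univ, a u * Real.log (a u / (r * b u)) = a u - r * b u := by
          intro u _
          exact (mul_log_div_ge (ha u) (mul_pos hrpos (hb u))).2.2 (hcond u)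
        rw [Finset.sum_congr rfl h0, hsumdiff]
        ring

/-- Chain-rule inequality with equality case. -/
lemma chainIneq {U V : Type} [Fintype U] [Fintype V] (ρ Q : U × V → ℝ)
    (hρ : ∀ p, 0 ≤ ρ p) (hQ : ∀ p, 0 < Q p) :
    (∑ v, margV ρ v * Real.log (margV ρ v / margV Q v)) ≤ (∑ p, ρ p * Real.log (ρ p / Q p)) ∧
    ((∑ p, ρ p * Real.log (ρ p / Q p))
        = (∑ v, margV ρ v * Real.log (margV ρ v / margV Q v)) ↔
      ∀ u v, ρ (u, v) = margV ρ v / margV Q v * Q (u, v)) := by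
  have hsplit : (∑ p : U × V, ρ p * Real.log (ρ p / Q p))
      = ∑ v, ∑ u, ρ (u, v) * Real.log (ρ (u, v) / Q (u, v)) := by
    rw [Fintype.sum_prod_type]
    exact Finset.sum_comm
  have hterm : ∀ v ∈ Finset.univ,
      margV ρ v * Real.log (margV ρ v / margV Q v)
        ≤ ∑ u, ρ (u, v) * Real.log (ρ (u, v) / Q (u, v)) := by
    intro v _
    exact (logSum (fun u => ρ (u, v)) (fun u => Q (u, v)) (fun u => hρ _) (fun u => hQ _)).1
  constructor
  · rw [hsplit]
    exact Finset.sum_le_sum hterm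
  · rw [hsplit]
    constructor
    · intro heq
      have := (Finset.sum_eq_sum_iff_of_le hterm).1 heq.symm
      intro u v
      exact (logSum (fun u => ρ (u, v)) (fun u => Q (u, v)) (fun u => hρ _) (fun u => hQ _)).2.1
        (this v (Finset.mem_univ v)).symm u
    · intro hcond
      have : ∀ v ∈ Finset.univ,
          (∑ u, ρ (u, v) * Real.log (ρ (u, v) / Q (u, v)))
            = margV ρ v * Real.log (margV ρ v / margV Q v) := by
        intro v _
        exact (logSum (fun u => ρ (u, v)) (fun u => Q (u, v)) (fun u => hρ _)
          (fun u => hQ _)).2.2 (fun u => hcond u v)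
      exact Finset.sum_congr rfl this


lemma kl2_eq {A : Type} [Fintype A] (p q : A → ℝ) :
    klDiv2 p q = (∑ a, p a * Real.log (p a / q a)) / Real.log 2 := by
  rw [klDiv2, Finset.sum_div]
  exact Finset.sum_congr rfl fun a _ => by rw [Real.logb]; ring

lemma continuous_kl {A : Type} [Fintype A] (q : A → ℝ) (hq : ∀ a, q a ≠ 0) :
    Continuous fun p : A → ℝ => klDiv2 p q := by
  have hrep : ∀ p : A → ℝ, klDiv2 p q
      = (∑ a, (p a * Real.log (p a) - p a * Real.log (q a))) / Real.log 2 := by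
    intro p
    rw [klDiv2, Finset.sum_div]
    refine Finset.sum_congr rfl fun a _ => ?_
    rw [Real.logb]
    rcases eq_or_ne (p a) 0 with h | h
    · simp [h]
    · rw [Real.log_div h (hq a)]; ring
  refine Continuous.congr ?_ (fun p => (hrep p).symm)
  exact (continuous_finset_sum _ fun a _ =>
    ((Real.continuous_mul_log.comp (continuous_apply a)).sub
      ((continuous_apply a).mul continuous_const))).div_const _

lemma exists_min {U V : Type} [Fintype U] [Fintype V] (Q : U × V → ℝ)
    (hq : ∀ p, Q p ≠ 0) (pU : U → ℝ) (pV : V → ℝ)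
    (hne : ∃ ρ : U × V → ℝ, IsPMF ρ ∧ (∀ u, margU ρ u = pU u) ∧ (∀ v, margV ρ v = pV v)) :
    ∃ ρ₀ : U × V → ℝ, (IsPMF ρ₀ ∧ (∀ u, margU ρ₀ u = pU u) ∧ (∀ v, margV ρ₀ v = pV v)) ∧
      ∀ ρ : U × V → ℝ, IsPMF ρ → (∀ u, margU ρ u = pU u) → (∀ v, margV ρ v = pV v) →
        klDiv2 ρ₀ Q ≤ klDiv2 ρ Q := by
  classical
  set T : Set ((U × V) → ℝ) :=
    {ρ | IsPMF ρ ∧ (∀ u, margU ρ u = pU u) ∧ (∀ v, margV ρ v = pV v)} with hT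
  have hclosed : IsClosed T := by
    have e : T = ((⋂ a, {ρ : (U × V) → ℝ | 0 ≤ ρ a}) ∩ {ρ | ∑ a, ρ a = 1}) ∩
        ((⋂ u, {ρ : (U × V) → ℝ | margU ρ u = pU u}) ∩
          (⋂ v, {ρ : (U × V) → ℝ | margV ρ v = pV v})) := by
      ext ρ
      simp [hT, IsPMF, Set.mem_iInter, and_assoc]
    rw [e]
    refine IsClosed.inter (IsClosed.inter ?_ ?_) (IsClosed.inter ?_ ?_)
    · exact isClosed_iInter fun a => isClosed_le continuous_const (continuous_apply a)
    · exact isClosed_eq (continuous_finset_sum _ fun a _ => continuous_apply a) continuous_const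
    · refine isClosed_iInter fun u => isClosed_eq ?_ continuous_const
      exact continuous_finset_sum _ fun v _ => continuous_apply (u, v)
    · refine isClosed_iInter fun v => isClosed_eq ?_ continuous_const
      exact continuous_finset_sum _ fun u _ => continuous_apply (u, v)
  have hsub : T ⊆ Set.pi Set.univ (fun _ : U × V => Set.Icc (0 : ℝ) 1) := by
    intro ρ hρ a _
    refine ⟨hρ.1.1 a, ?_⟩
    calc ρ a ≤ ∑ b, ρ b := Finset.single_le_sum (fun b _ => hρ.1.1 b) (Finset.mem_univ a)
    _ = 1 := hρ.1.2
  have hK : IsCompact T :=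
    (isCompact_univ_pi fun _ => isCompact_Icc).of_isClosed_subset hclosed hsub
  obtain ⟨ρ₀, hρ₀T, hmin⟩ := hK.exists_isMinOn hne
    ((continuous_kl Q hq).continuousOn)
  exact ⟨ρ₀, hρ₀T, fun ρ h1 h2 h3 => hmin ⟨h1, h2, h3⟩⟩

end Helpers

/-- The minimum of `D(π_{UV} ‖ Q_{UV})` over couplings of
`P_U` and `P_V` is at least `D(P_V ‖ Q_V)`, with equality if and only if
`Σ_v P_V(v) Q_{U|V}(u|v) = P_U(u)` for every `u`. -/
theorem minDivMarg_ge_local_with_equality_iff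
    {U V : Type} [Fintype U] [Fintype V]
    (P Q : U × V → ℝ) (hP : IsPMF P) (hQ : IsPMF Q) (hQpos : ∀ p : U × V, 0 < Q p) :
    klDiv2 (margV P) (margV Q) ≤ minDivMarg Q (margU P) (margV P) ∧
    (minDivMarg Q (margU P) (margV P) = klDiv2 (margV P) (margV Q) ↔
      ∀ u : U, ∑ v : V, margV P v * (Q (u, v) / margV Q v) = margU P u) := by
  classical
  have hl2 : (0:ℝ) < Real.log 2 := Real.log_pos (by norm_num)
  have hUne : Nonempty U := by
    rcases isEmpty_or_nonempty U with h | h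
    · exfalso
      have h2 := hP.2
      rw [Finset.univ_eq_empty, Finset.sum_empty] at h2
      exact zero_ne_one h2
    · exact h
  have hqV : ∀ v, 0 < margV Q v := fun v =>
    Finset.sum_pos (fun u _ => hQpos (u, v)) Finset.univ_nonempty
  have hpVnn : ∀ v, 0 ≤ margV P v := fun v => Finset.sum_nonneg fun u _ => hP.1 (u, v)
  have hpVsum : ∑ v, margV P v = 1 := by
    rw [← hP.2, Fintype.sum_prod_type]
    exact (Finset.sum_comm).symm
  set S : Set ℝ := {d | ∃ π : U × V → ℝ, IsPMF π ∧
    (∀ u, margU π u = margU P u) ∧ (∀ v, margV π v = margV P v) ∧ d = klDiv2 π Q} with hSdef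
  have hmDM : minDivMarg Q (margU P) (margV P) = sInf S := rfl
  have hmem0 : klDiv2 P Q ∈ S := ⟨P, hP, fun _ => rfl, fun _ => rfl, rfl⟩
  have hSne : S.Nonempty := ⟨_, hmem0⟩
  have hlow : ∀ d ∈ S, klDiv2 (margV P) (margV Q) ≤ d := by
    rintro d ⟨ρ, hρ, hmU, hmV, rfl⟩
    have hmV' : margV ρ = margV P := funext hmV
    have h := (chainIneq ρ Q hρ.1 hQpos).1
    rw [hmV'] at h
    rw [kl2_eq, kl2_eq]
    exact (div_le_div_iff_of_pos_right hl2).2 h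
  have hbdd : BddBelow S := ⟨_, hlow⟩
  have hge : klDiv2 (margV P) (margV Q) ≤ sInf S := le_csInf hSne hlow
  rw [hmDM]
  refine ⟨hge, ?_, ?_⟩
  · -- forward: equality implies the marginal condition
    intro heq
    obtain ⟨ρ₀, ⟨hρ₀PMF, hρ₀U, hρ₀V⟩, hmin⟩ :=
      exists_min Q (fun p => (hQpos p).ne') (margU P) (margV P)
        ⟨P, hP, fun _ => rfl, fun _ => rfl⟩
    have hmem : klDiv2 ρ₀ Q ∈ S := ⟨ρ₀, hρ₀PMF, hρ₀U, hρ₀V, rfl⟩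
    have h1 : sInf S ≤ klDiv2 ρ₀ Q := csInf_le hbdd hmem
    have h2 : klDiv2 ρ₀ Q ≤ sInf S := le_csInf hSne (by
      rintro d ⟨ρ, hρ, hmU, hmV, rfl⟩
      exact hmin ρ hρ hmU hmV)
    have heq0 : klDiv2 ρ₀ Q = klDiv2 (margV P) (margV Q) := by
      rw [le_antisymm h2 h1, heq]
    have hmV' : margV ρ₀ = margV P := funext hρ₀V
    have hnat : (∑ p, ρ₀ p * Real.log (ρ₀ p / Q p))
        = ∑ v, margV ρ₀ v * Real.log (margV ρ₀ v / margV Q v) := by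
      rw [kl2_eq, kl2_eq] at heq0
      rw [hmV']
      field_simp [hl2.ne'] at heq0
      exact heq0
    have hcond := (chainIneq ρ₀ Q hρ₀PMF.1 hQpos).2.1 hnat
    intro u
    have h3 : margU ρ₀ u = ∑ v, margV P v * (Q (u, v) / margV Q v) := by
      refine Finset.sum_congr rfl fun v _ => ?_
      rw [hcond u v, hρ₀V v]
      ring
    rw [← hρ₀U u]
    exact h3.symm
  · -- backward: the marginal condition implies equality
    intro hcond
    have hrow : ∀ v, ∑ u, margV P v * (Q (u, v) / margV Q v) = margV P v := by
      intro v
      rw [← Finset.mul_sum, ← Finset.sum_div]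
      have hQv : ∑ u, Q (u, v) = margV Q v := rfl
      rw [hQv, div_self (hqV v).ne', mul_one]
    have hratio : ∀ p : U × V, margV P p.2 * (Q p / margV Q p.2) / Q p
        = margV P p.2 / margV Q p.2 := by
      intro p
      field_simp
      rw [mul_comm (margV P p.2) (Q p),
        mul_div_mul_left _ _ (hQpos p).ne']
    have hmemρ : klDiv2 (margV P) (margV Q) ∈ S := by
      refine ⟨fun p => margV P p.2 * (Q p / margV Q p.2), ⟨?_, ?_⟩, ?_, ?_, ?_⟩
      · exact fun p => mul_nonneg (hpVnn _) (div_nonneg (hQpos p).le (hqV _).le)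
      · show ∑ p : U × V, margV P p.2 * (Q p / margV Q p.2) = 1
        rw [Fintype.sum_prod_type, Finset.sum_comm]
        have : ∀ v ∈ Finset.univ, ∑ u, margV P v * (Q (u, v) / margV Q v) = margV P v :=
          fun v _ => hrow v
        rw [Finset.sum_congr rfl this, hpVsum]
      · intro u
        exact hcond u
      · intro v
        exact hrow v
      · show klDiv2 (margV P) (margV Q) = ∑ p : U × V,
          (margV P p.2 * (Q p / margV Q p.2)) * Real.logb 2
            ((margV P p.2 * (Q p / margV Q p.2)) / Q p)
        have e1 : ∀ p : U × V, (margV P p.2 * (Q p / margV Q p.2)) * Real.logb 2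
            ((margV P p.2 * (Q p / margV Q p.2)) / Q p)
            = (margV P p.2 * (Q p / margV Q p.2)) * Real.logb 2
              (margV P p.2 / margV Q p.2) := by
          intro p
          rw [hratio p]
        rw [Finset.sum_congr rfl fun p _ => e1 p, Fintype.sum_prod_type, Finset.sum_comm]
        have e2 : ∀ v ∈ Finset.univ, (∑ u, (margV P v * (Q (u, v) / margV Q v)) * Real.logb 2
            (margV P v / margV Q v)) = margV P v * Real.logb 2 (margV P v / margV Q v) := by
          intro v _
          rw [← Finset.sum_mul, hrow v]
        rw [Finset.sum_congr rfl e2]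
        rfl
    exact le_antisymm (csInf_le hbdd hmemρ) hge
end

section
/- Suppose the DMC admits inputs x₀, x₁ ∈ 𝒳 and an output y* ∈ 𝒴 with γ_{x₀} := Γ_{Y|X}(y*|x₀) > 0 and Γ_{Y|X}(y*|x₁) = 0. Fix μ > 0 and k ≥ 1 and consider the scheme where the sensor sends X^k = x₀^k if U^n ∈ 𝒯_μ^{(n)}(P_U) and X^k = x₁^k otherwise, and the decision center outputs Ĥ = 0 if and only if at least one channel output equals y* and V^n ∈ 𝒯_μ^{(n)}(P_V). Then its error probabilities satisfy: (i) 1 − α_n = Pr[U^n ∈ 𝒯_μ^{(n)}(P_U) and V^n ∈ 𝒯_μ^{(n)}(P_V) | H=0] · (1 − (1 − γ_{x₀})^k); and (ii) β_n ≤ (n+1)^{|𝒰||𝒱|} · 2^{−n · min D(π_{UV}‖Q_{UV})}, the minimum being over all pmfs π_{UV} on 𝒰×𝒱 with |π_U(u) − P_U(u)| ≤ μ for all u and |π_V(v) − P_V(v)| ≤ μ for all v. -/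
open scoped Classical

/-- Empirical frequency of the symbol `x` in the sequence `a : Fin n → A`. -/
noncomputable def empFreq {A : Type} [DecidableEq A] {n : ℕ} (a : Fin n → A) (x : A) : ℝ :=
  ((Finset.univ.filter (fun i : Fin n => a i = x)).card : ℝ) / n

/-- Strong `μ`-typicality of a sequence with respect to a pmf `p`. -/
def Typical {A : Type} [Fintype A] [DecidableEq A] (μ : ℝ) {n : ℕ}
    (p : A → ℝ) (a : Fin n → A) : Prop :=
  ∀ x : A, (p x = 0 → empFreq a x = 0) ∧ (p x ≠ 0 → |empFreq a x - p x| ≤ μ)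

/-- Probability, under source law `R` (i.i.d. over `n` samples) and DMC `Γ`
(memoryless over `k` uses, input `f u`), that the decision `g v y` equals `b`.
Here `b = true` encodes `Ĥ = 1` and `b = false` encodes `Ĥ = 0`. -/
noncomputable def decProb {U V X Y : Type} [Fintype U] [Fintype V] [Fintype X] [Fintype Y]
    (R : U × V → ℝ) (Γ : X → Y → ℝ) {n k : ℕ}
    (f : (Fin n → U) → Fin k → X) (g : (Fin n → V) → (Fin k → Y) → Bool) (b : Bool) : ℝ :=
  ∑ u : Fin n → U, ∑ v : Fin n → V, ∑ y : Fin k → Y,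
    (∏ i, R (u i, v i)) * (∏ j, Γ (f u j) (y j)) * (if g v y = b then 1 else 0)

/- ### Auxiliary lemmas -/

lemma sum_pi_prod' {A : Type} [Fintype A] (m : ℕ) (f : A → ℝ) :
    ∑ w : Fin m → A, ∏ i, f (w i) = (∑ a, f a) ^ m := by
  rw [← Fintype.piFinset_univ, ← Finset.prod_univ_sum (fun _ : Fin m => (Finset.univ : Finset A)) (fun _ a => f a)]
  simp [Finset.prod_const]

lemma prod_comp_count {A : Type} [Fintype A] [DecidableEq A] {m : ℕ} (w : Fin m → A) (f : A → ℝ) :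
    ∏ i, f (w i) = ∏ a, f a ^ (Finset.univ.filter (fun i => w i = a)).card := by
  rw [← Finset.prod_fiberwise Finset.univ w (fun i => f (w i))]
  apply Finset.prod_congr rfl
  intro a _
  rw [Finset.prod_congr rfl (fun i hi => by
    simp only [Finset.mem_filter] at hi; rw [hi.2]), Finset.prod_const]

lemma gibbs {A : Type} [Fintype A] (p q : A → ℝ) (hp : IsPMF p) (hq : IsPMF q)
    (hqpos : ∀ a, 0 < q a) : 0 ≤ klDiv2 p q := by
  have key : ∑ a, p a * Real.log (q a / p a) ≤ 0 := by
    calc ∑ a, p a * Real.log (q a / p a) ≤ ∑ a, (q a - p a) := by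
          apply Finset.sum_le_sum
          intro a _
          rcases eq_or_lt_of_le (hp.1 a) with h | h
          · rw [← h]; simp; linarith [hqpos a]
          · have hd : 0 < q a / p a := div_pos (hqpos a) h
            have := Real.log_le_sub_one_of_pos hd
            calc p a * Real.log (q a / p a) ≤ p a * (q a / p a - 1) := by
                  exact mul_le_mul_of_nonneg_left this (le_of_lt h)
              _ = q a - p a := by field_simp
      _ = 0 := by rw [Finset.sum_sub_distrib, hp.2, hq.2]; ring
  have flip : ∑ a, p a * Real.log (p a / q a) = - ∑ a, p a * Real.log (q a / p a) := by
    rw [← Finset.sum_neg_distrib]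
    apply Finset.sum_congr rfl
    intro a _
    rcases eq_or_lt_of_le (hp.1 a) with h | h
    · rw [← h]; ring
    · have : p a / q a = (q a / p a)⁻¹ := by field_simp
      rw [this, Real.log_inv]; ring
  have : 0 ≤ ∑ a, p a * Real.log (p a / q a) := by rw [flip]; linarith
  unfold klDiv2
  have h2 : (0:ℝ) < Real.log 2 := Real.log_pos (by norm_num)
  calc (0:ℝ) = (∑ a, p a * Real.log (p a / q a)) * 0 := by ring
    _ ≤ (∑ a, p a * Real.log (p a / q a)) * (Real.log 2)⁻¹ := by
        apply mul_le_mul_of_nonneg_left (by positivity) this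
    _ = ∑ a, p a * Real.logb 2 (p a / q a) := by
        rw [Finset.sum_mul]
        apply Finset.sum_congr rfl
        intro a _
        rw [Real.logb, div_eq_mul_inv]; ring

lemma channel_hit {Y : Type} [Fintype Y] (γ : Y → ℝ) (hγ : IsPMF γ) (ystar : Y) (k : ℕ) :
    ∑ y : Fin k → Y, (∏ j, γ (y j)) * (if (∃ j, y j = ystar) then (1:ℝ) else 0)
      = 1 - (1 - γ ystar) ^ k := by
  have h1 : ∑ y : Fin k → Y, (∏ j, γ (y j)) * ((if (∃ j, y j = ystar) then (1:ℝ) else 0) + (if (∃ j, y j = ystar) then (0:ℝ) else 1)) = 1 := by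
    have : ∀ y : Fin k → Y, ((if (∃ j, y j = ystar) then (1:ℝ) else 0) + (if (∃ j, y j = ystar) then (0:ℝ) else 1)) = 1 := by
      intro y; by_cases h : ∃ j, y j = ystar <;> simp [h]
    simp only [this, mul_one]
    rw [sum_pi_prod' k γ, hγ.2, one_pow]
  have h2 : ∑ y : Fin k → Y, (∏ j, γ (y j)) * (if (∃ j, y j = ystar) then (0:ℝ) else 1)
      = (1 - γ ystar) ^ k := by
    have step : ∀ y : Fin k → Y, (∏ j, γ (y j)) * (if (∃ j, y j = ystar) then (0:ℝ) else 1)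
        = ∏ j, (γ (y j) * (if y j = ystar then 0 else 1)) := by
      intro y
      by_cases h : ∃ j, y j = ystar
      · obtain ⟨j, hj⟩ := h
        rw [if_pos ⟨j, hj⟩, mul_zero]
        symm
        apply Finset.prod_eq_zero (Finset.mem_univ j)
        rw [if_pos hj, mul_zero]
      · rw [if_neg h, mul_one]
        push_neg at h
        apply Finset.prod_congr rfl
        intro j _
        rw [if_neg (h j), mul_one]
    simp only [step]
    rw [sum_pi_prod' k (fun a => γ a * (if a = ystar then 0 else 1))]
    congr 1
    have : ∑ a, γ a * (if a = ystar then (0:ℝ) else 1) = (∑ a, γ a) - γ ystar := by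
      rw [← Finset.sum_erase_add _ _ (Finset.mem_univ ystar), if_pos rfl, mul_zero, add_zero,
        ← Finset.sum_erase_add _ γ (Finset.mem_univ ystar), add_sub_cancel_right]
      apply Finset.sum_congr rfl
      intro a ha
      rw [if_neg (Finset.ne_of_mem_erase ha), mul_one]
    rw [this, hγ.2]
  have expand : ∑ y : Fin k → Y, (∏ j, γ (y j)) * ((if (∃ j, y j = ystar) then (1:ℝ) else 0) + (if (∃ j, y j = ystar) then (0:ℝ) else 1)) = (∑ y : Fin k → Y, (∏ j, γ (y j)) * (if (∃ j, y j = ystar) then (1:ℝ) else 0)) + ∑ y : Fin k → Y, (∏ j, γ (y j)) * (if (∃ j, y j = ystar) then (0:ℝ) else 1) := by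
    rw [← Finset.sum_add_distrib]
    apply Finset.sum_congr rfl; intro y _; ring
  rw [expand, h2] at h1
  linarith

lemma rpow_sum' {A : Type} (s : Finset A) (e : A → ℝ) :
    (2:ℝ) ^ (∑ a ∈ s, e a) = ∏ a ∈ s, (2:ℝ) ^ (e a) := by
  induction s using Finset.cons_induction with
  | empty => simp
  | cons a s ha ih =>
    rw [Finset.sum_cons, Finset.prod_cons, Real.rpow_add (by norm_num), ih]

lemma typeclass_bound {A : Type} [Fintype A] [DecidableEq A] {n : ℕ} (hn : 0 < n)
    (Q : A → ℝ) (hQpos : ∀ a, 0 < Q a) (t : A → ℕ) (ht : ∑ a, t a = n) :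
    ∑ w ∈ (Finset.univ.filter (fun w : Fin n → A =>
        (fun a => (Finset.univ.filter (fun i => w i = a)).card) = t)), ∏ i, Q (w i)
      ≤ (2:ℝ) ^ (-(n:ℝ) * klDiv2 (fun a => (t a : ℝ)/n) Q) := by
  set π : A → ℝ := fun a => (t a : ℝ)/n with hπdef
  have hπnn : ∀ a, 0 ≤ π a := fun a => by positivity
  have hπpmf : IsPMF π := by
    refine ⟨hπnn, ?_⟩
    rw [hπdef]
    rw [← Finset.sum_div]
    rw [← Nat.cast_sum, ht]
    field_simp
  have hπpos : ∀ a, 0 < t a → 0 < π a := by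
    intro a hta
    apply div_pos (by exact_mod_cast hta) (by exact_mod_cast hn)
  set S := Finset.univ.filter (fun w : Fin n → A =>
      (fun a => (Finset.univ.filter (fun i => w i = a)).card) = t) with hS
  have hcount : ∀ w ∈ S, ∀ a, (Finset.univ.filter (fun i => w i = a)).card = t a := by
    intro w hw a
    rw [hS, Finset.mem_filter] at hw
    exact congrFun hw.2 a
  have hvalQ : ∀ w ∈ S, ∏ i, Q (w i) = ∏ a, Q a ^ t a := by
    intro w hw
    rw [prod_comp_count]
    exact Finset.prod_congr rfl (fun a _ => by rw [hcount w hw a])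
  have hvalπ : ∀ w ∈ S, ∏ i, π (w i) = ∏ a, π a ^ t a := by
    intro w hw
    rw [prod_comp_count]
    exact Finset.prod_congr rfl (fun a _ => by rw [hcount w hw a])
  have hb : (S.card : ℝ) * ∏ a, π a ^ t a ≤ 1 := by
    have : ∑ w ∈ S, ∏ i, π (w i) = (S.card : ℝ) * ∏ a, π a ^ t a := by
      rw [Finset.sum_congr rfl hvalπ, Finset.sum_const, nsmul_eq_mul]
    rw [← this]
    calc ∑ w ∈ S, ∏ i, π (w i) ≤ ∑ w : Fin n → A, ∏ i, π (w i) := by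
          apply Finset.sum_le_sum_of_subset_of_nonneg (Finset.subset_univ S)
          intro w _ _
          exact Finset.prod_nonneg (fun i _ => hπnn _)
      _ = 1 := by rw [sum_pi_prod' n π, hπpmf.2, one_pow]
  have hπtpos : ∀ a, 0 < π a ^ t a := by
    intro a
    rcases Nat.eq_zero_or_pos (t a) with h | h
    · rw [h, pow_zero]; norm_num
    · exact pow_pos (hπpos a h) _
  have hprodπpos : 0 < ∏ a, π a ^ t a := Finset.prod_pos (fun a _ => hπtpos a)
  have hd : ∑ w ∈ S, ∏ i, Q (w i) ≤ ∏ a, (Q a ^ t a / π a ^ t a) := by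
    rw [Finset.sum_congr rfl hvalQ, Finset.sum_const, nsmul_eq_mul]
    have hcard : (S.card : ℝ) ≤ (∏ a, π a ^ t a)⁻¹ := by
      rw [inv_eq_one_div, le_div_iff₀ hprodπpos]
      exact hb
    calc (S.card : ℝ) * ∏ a, Q a ^ t a
        ≤ (∏ a, π a ^ t a)⁻¹ * ∏ a, Q a ^ t a := by
          apply mul_le_mul_of_nonneg_right hcard
          exact Finset.prod_nonneg (fun a _ => pow_nonneg (le_of_lt (hQpos a)) _)
      _ = ∏ a, (Q a ^ t a / π a ^ t a) := by
          rw [Finset.prod_div_distrib, div_eq_inv_mul]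
  have he : (2:ℝ) ^ (-(n:ℝ) * klDiv2 π Q) = ∏ a, (Q a ^ t a / π a ^ t a) := by
    have hexp : -(n:ℝ) * klDiv2 π Q = ∑ a, (t a : ℝ) * Real.logb 2 (Q a / π a) := by
      unfold klDiv2
      rw [Finset.mul_sum]
      apply Finset.sum_congr rfl
      intro a _
      rcases Nat.eq_zero_or_pos (t a) with h | h
      · rw [hπdef]
        simp [h]
      · have hπa := hπpos a h
        have : π a / Q a = (Q a / π a)⁻¹ := by field_simp
        rw [this, Real.logb_inv]
        have : (n:ℝ) * π a = t a := by rw [hπdef]; field_simp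
        rw [← this]
        ring
    rw [hexp, rpow_sum']
    apply Finset.prod_congr rfl
    intro a _
    rcases Nat.eq_zero_or_pos (t a) with h | h
    · simp [h]
    · have hπa := hπpos a h
      have hr : 0 < Q a / π a := div_pos (hQpos a) hπa
      rw [mul_comm, Real.rpow_mul (by norm_num), Real.rpow_logb (by norm_num) (by norm_num) hr,
        Real.rpow_natCast, div_pow]
  rw [he]
  exact hd

lemma card_filter_fst {U V : Type} [Fintype U] [Fintype V] [DecidableEq U] [DecidableEq V]
    {m : ℕ} (w : Fin m → U × V) (x : U) :
    (Finset.univ.filter (fun i => (w i).1 = x)).card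
      = ∑ b, (Finset.univ.filter (fun i => w i = (x, b))).card := by
  rw [Finset.card_filter]
  have h2 : ∀ b, (Finset.univ.filter (fun i => w i = (x, b))).card
      = ∑ i, if w i = (x, b) then 1 else 0 := fun b => Finset.card_filter _ _
  simp_rw [h2]
  rw [Finset.sum_comm]
  apply Finset.sum_congr rfl
  intro i _
  by_cases h : (w i).1 = x
  · rw [if_pos h]
    simp only [Prod.ext_iff, h, true_and]
    symm
    rw [Finset.sum_ite_eq Finset.univ (w i).2 (fun _ => 1)]
    simp
  · rw [if_neg h]
    symm
    apply Finset.sum_eq_zero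
    intro b _
    rw [if_neg (fun hh => h (by rw [hh]))]

lemma card_filter_snd {U V : Type} [Fintype U] [Fintype V] [DecidableEq U] [DecidableEq V]
    {m : ℕ} (w : Fin m → U × V) (x : V) :
    (Finset.univ.filter (fun i => (w i).2 = x)).card
      = ∑ b, (Finset.univ.filter (fun i => w i = (b, x))).card := by
  rw [Finset.card_filter]
  have h2 : ∀ b, (Finset.univ.filter (fun i => w i = (b, x))).card
      = ∑ i, if w i = (b, x) then 1 else 0 := fun b => Finset.card_filter _ _
  simp_rw [h2]
  rw [Finset.sum_comm]
  apply Finset.sum_congr rfl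
  intro i _
  by_cases h : (w i).2 = x
  · rw [if_pos h]
    simp only [Prod.ext_iff, h, and_true]
    symm
    rw [Finset.sum_ite_eq Finset.univ (w i).1 (fun _ => 1)]
    simp
  · rw [if_neg h]
    symm
    apply Finset.sum_eq_zero
    intro b _
    rw [if_neg (fun hh => h (by rw [hh]))]

lemma sum_count {A : Type} [Fintype A] [DecidableEq A] {m : ℕ} (w : Fin m → A) :
    ∑ a, (Finset.univ.filter (fun i => w i = a)).card = m := by
  calc ∑ a, (Finset.univ.filter (fun i => w i = a)).card
      = (Finset.univ : Finset (Fin m)).card :=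
        (Finset.card_eq_sum_card_fiberwise (fun i _ => Finset.mem_univ (w i))).symm
    _ = m := by simp

lemma sum_sum_prod_pair {U V : Type} [Fintype U] [Fintype V] {m : ℕ} (F : (Fin m → U × V) → ℝ) :
    ∑ u : Fin m → U, ∑ v : Fin m → V, F (fun i => (u i, v i)) = ∑ w : Fin m → U × V, F w := by
  have e1 : (∑ u : Fin m → U, ∑ v : Fin m → V, F fun i => (u i, v i))
      = ∑ p : (Fin m → U) × (Fin m → V), F (fun i => (p.1 i, p.2 i)) :=
    (Fintype.sum_prod_type (f := fun p : (Fin m → U) × (Fin m → V) => F (fun i => (p.1 i, p.2 i)))).symm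
  rw [e1]
  apply Fintype.sum_bijective (fun p : (Fin m → U) × (Fin m → V) => fun i => (p.1 i, p.2 i))
  · constructor
    · intro p q h
      have h1 : ∀ i, (p.1 i, p.2 i) = (q.1 i, q.2 i) := fun i => congrFun h i
      ext i
      · exact (Prod.ext_iff.1 (h1 i)).1
      · exact (Prod.ext_iff.1 (h1 i)).2
    · intro w
      exact ⟨(fun i => (w i).1, fun i => (w i).2), by ext i <;> simp⟩
  · intro p
    rfl

/-- Analysis of the one-bit typicality scheme over a partially
connected DMC: the sensor sends `x₀^k` if `U^n` is `μ`-typical for `P_U` and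
`x₁^k` otherwise, and the center accepts (`Ĥ = 0`) iff some output equals `y*`
and `V^n` is `μ`-typical for `P_V`. Then
(i) `1 − α_n = Pr[U^n, V^n marginally typical | H=0] · (1 − (1 − γ_{x₀})^k)`, and
(ii) `β_n ≤ (n+1)^{|𝒰||𝒱|} 2^{−n·min D(π_{UV}‖Q_{UV})}` with the minimum over
pmfs whose marginals are within `μ` of `P_U` and `P_V`. -/
theorem typicality_scheme_error_analysis
    {U V X Y : Type} [Fintype U] [Fintype V] [Fintype X] [Fintype Y]
    [DecidableEq U] [DecidableEq V]
    (P Q : U × V → ℝ) (hP : IsPMF P) (hQ : IsPMF Q) (hQpos : ∀ p : U × V, 0 < Q p)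
    (Γ : X → Y → ℝ) (hΓ : ∀ x, IsPMF (Γ x))
    (x₀ x₁ : X) (ystar : Y)
    (h₀ : 0 < Γ x₀ ystar) (h₁ : Γ x₁ ystar = 0)
    (μ : ℝ) (hμ : 0 < μ) (n k : ℕ) (hk : 1 ≤ k)
    (f : (Fin n → U) → Fin k → X)
    (g : (Fin n → V) → (Fin k → Y) → Bool)
    (hf : ∀ u : Fin n → U,
      f u = fun _ => if Typical μ (margU P) u then x₀ else x₁)
    (hg : ∀ (v : Fin n → V) (y : Fin k → Y),
      g v y = false ↔ ((∃ j : Fin k, y j = ystar) ∧ Typical μ (margV P) v)) :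
    1 - decProb P Γ f g true
      = (∑ u : Fin n → U, ∑ v : Fin n → V, (∏ i, P (u i, v i)) *
          (if Typical μ (margU P) u ∧ Typical μ (margV P) v then 1 else 0))
        * (1 - (1 - Γ x₀ ystar) ^ k) ∧
    decProb Q Γ f g false
      ≤ ((n : ℝ) + 1) ^ (Fintype.card U * Fintype.card V) *
        (2 : ℝ) ^ (-(n : ℝ) * sInf {d | ∃ π : U × V → ℝ, IsPMF π ∧
          (∀ u : U, |margU π u - margU P u| ≤ μ) ∧
          (∀ v : V, |margV π v - margV P v| ≤ μ) ∧ d = klDiv2 π Q}) := by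
  -- channel sum for the input chosen by the scheme
  have hchan : ∀ u : Fin n → U,
      ∑ y : Fin k → Y, (∏ j, Γ (f u j) (y j)) * (if (∃ j, y j = ystar) then (1:ℝ) else 0)
        = if Typical μ (margU P) u then 1 - (1 - Γ x₀ ystar) ^ k else 0 := by
    intro u
    have hfu : ∀ j, f u j = (if Typical μ (margU P) u then x₀ else x₁) := by
      intro j; rw [hf u]
    by_cases hu : Typical μ (margU P) u
    · simp only [hu, if_true] at hfu ⊢
      simp only [hfu]
      exact channel_hit (Γ x₀) (hΓ x₀) ystar k
    · simp only [hu, if_false] at hfu ⊢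
      simp only [hfu]
      rw [channel_hit (Γ x₁) (hΓ x₁) ystar k, h₁]
      simp
  -- the acceptance probability under a generic source law R
  have key : ∀ R : U × V → ℝ, decProb R Γ f g false
      = (∑ u : Fin n → U, ∑ v : Fin n → V, (∏ i, R (u i, v i)) *
          (if Typical μ (margU P) u ∧ Typical μ (margV P) v then 1 else 0))
        * (1 - (1 - Γ x₀ ystar) ^ k) := by
    intro R
    unfold decProb
    rw [Finset.sum_mul]
    apply Finset.sum_congr rfl
    intro u _
    rw [Finset.sum_mul]
    apply Finset.sum_congr rfl
    intro v _
    have hind : ∀ y : Fin k → Y, (if g v y = false then (1:ℝ) else 0)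
        = (if (∃ j, y j = ystar) then 1 else 0) * (if Typical μ (margV P) v then 1 else 0) := by
      intro y
      by_cases h1 : (∃ j, y j = ystar) <;> by_cases h2 : Typical μ (margV P) v <;>
        simp [hg, h1, h2]
    calc ∑ y : Fin k → Y, (∏ i, R (u i, v i)) * (∏ j, Γ (f u j) (y j)) * (if g v y = false then 1 else 0)
        = (∏ i, R (u i, v i)) * (if Typical μ (margV P) v then 1 else 0) *
            ∑ y : Fin k → Y, (∏ j, Γ (f u j) (y j)) * (if (∃ j, y j = ystar) then 1 else 0) := by
          rw [Finset.mul_sum]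
          apply Finset.sum_congr rfl
          intro y _
          rw [hind y]; ring
      _ = (∏ i, R (u i, v i)) * (if Typical μ (margU P) u ∧ Typical μ (margV P) v then 1 else 0) * (1 - (1 - Γ x₀ ystar) ^ k) := by
          rw [hchan u]
          by_cases hu : Typical μ (margU P) u <;> by_cases hv : Typical μ (margV P) v <;>
            simp [hu, hv]
  -- total probability of the two decisions is 1
  have total : ∀ R : U × V → ℝ, IsPMF R →
      decProb R Γ f g true + decProb R Γ f g false = 1 := by
    intro R hR
    unfold decProb
    rw [← Finset.sum_add_distrib]
    have step1 : ∀ u : Fin n → U,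
        ((∑ v : Fin n → V, ∑ y : Fin k → Y,
          (∏ i, R (u i, v i)) * (∏ j, Γ (f u j) (y j)) * (if g v y = true then 1 else 0)) +
         (∑ v : Fin n → V, ∑ y : Fin k → Y,
          (∏ i, R (u i, v i)) * (∏ j, Γ (f u j) (y j)) * (if g v y = false then 1 else 0)))
        = ∑ v : Fin n → V, ∏ i, R (u i, v i) := by
      intro u
      rw [← Finset.sum_add_distrib]
      apply Finset.sum_congr rfl
      intro v _
      rw [← Finset.sum_add_distrib]
      have : ∀ y : Fin k → Y,
          ((∏ i, R (u i, v i)) * (∏ j, Γ (f u j) (y j)) * (if g v y = true then 1 else 0) +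
           (∏ i, R (u i, v i)) * (∏ j, Γ (f u j) (y j)) * (if g v y = false then 1 else 0))
          = (∏ i, R (u i, v i)) * (∏ j, Γ (f u j) (y j)) := by
        intro y
        cases hgy : g v y <;> simp [hgy] <;> ring
      rw [Finset.sum_congr rfl (fun y _ => this y), ← Finset.mul_sum]
      have : ∑ y : Fin k → Y, ∏ j, Γ (f u j) (y j) = ∏ j, ∑ b, Γ (f u j) b := by
        rw [← Fintype.piFinset_univ, ← Finset.prod_univ_sum]
      rw [this]
      have : ∀ j : Fin k, ∑ b, Γ (f u j) b = 1 := fun j => (hΓ (f u j)).2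
      rw [Finset.prod_congr rfl (fun j _ => this j), Finset.prod_const_one, mul_one]
    rw [Finset.sum_congr rfl (fun u _ => step1 u)]
    have := sum_sum_prod_pair (m := n) (fun w : Fin n → U × V => ∏ i, R (w i))
    rw [this, sum_pi_prod' n R, hR.2, one_pow]
  constructor
  · have h1 := total P hP
    have h2 := key P
    linarith
  · rw [key Q]
    set S : Set ℝ := {d | ∃ π : U × V → ℝ, IsPMF π ∧
          (∀ u : U, |margU π u - margU P u| ≤ μ) ∧
          (∀ v : V, |margV π v - margV P v| ≤ μ) ∧ d = klDiv2 π Q} with hSdef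
    have hbdd : BddBelow S := by
      refine ⟨0, fun d hd => ?_⟩
      obtain ⟨π, hπ, _, _, rfl⟩ := hd
      exact gibbs π Q hπ hQ hQpos
    have hγ1 : Γ x₀ ystar ≤ 1 := by
      rw [← (hΓ x₀).2]
      exact Finset.single_le_sum (fun y _ => (hΓ x₀).1 y) (Finset.mem_univ ystar)
    have hrpow_nn : (0:ℝ) ≤ (2:ℝ) ^ (-(n : ℝ) * sInf S) := Real.rpow_nonneg (by norm_num) _
    set T := ∑ u : Fin n → U, ∑ v : Fin n → V, (∏ i, Q (u i, v i)) *
          (if Typical μ (margU P) u ∧ Typical μ (margV P) v then 1 else 0) with hTdef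
    have hTnn : 0 ≤ T := by
      apply Finset.sum_nonneg; intro u _
      apply Finset.sum_nonneg; intro v _
      apply mul_nonneg (Finset.prod_nonneg fun i _ => (hQpos _).le)
      positivity
    have hfac : T * (1 - (1 - Γ x₀ ystar) ^ k) ≤ T := by
      have hc : 0 ≤ (1 - Γ x₀ ystar) ^ k := pow_nonneg (by linarith) k
      nlinarith [mul_nonneg hTnn hc]
    have hTw : T = ∑ w ∈ Finset.univ.filter (fun w : Fin n → U × V =>
        Typical μ (margU P) (fun i => (w i).1) ∧ Typical μ (margV P) (fun i => (w i).2)),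
        ∏ i, Q (w i) := by
      rw [hTdef, Finset.sum_filter,
        ← sum_sum_prod_pair (fun w : Fin n → U × V =>
          if Typical μ (margU P) (fun i => (w i).1) ∧ Typical μ (margV P) (fun i => (w i).2)
            then ∏ i, Q (w i) else 0)]
      apply Finset.sum_congr rfl
      intro u _
      apply Finset.sum_congr rfl
      intro v _
      show (∏ i, Q (u i, v i)) * (if Typical μ (margU P) u ∧ Typical μ (margV P) v then 1 else 0)
        = if Typical μ (margU P) u ∧ Typical μ (margV P) v then ∏ i, Q (u i, v i) else 0
      by_cases h : Typical μ (margU P) u ∧ Typical μ (margV P) v <;> simp [h]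
    suffices hTle : T ≤ ((n : ℝ) + 1) ^ (Fintype.card U * Fintype.card V) *
        (2 : ℝ) ^ (-(n : ℝ) * sInf S) by linarith
    set B := Finset.univ.filter (fun w : Fin n → U × V =>
        Typical μ (margU P) (fun i => (w i).1) ∧ Typical μ (margV P) (fun i => (w i).2))
      with hBdef
    rcases Nat.eq_zero_or_pos n with hn | hn
    · subst hn
      have h1 : T ≤ 1 := by
        rw [hTw]
        calc ∑ w ∈ B, ∏ i, Q (w i) ≤ ∑ w : Fin 0 → U × V, ∏ i, Q (w i) := by
              apply Finset.sum_le_sum_of_subset_of_nonneg (Finset.filter_subset _ _)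
              intro w _ _
              exact Finset.prod_nonneg fun i _ => (hQpos _).le
          _ = 1 := by rw [sum_pi_prod' 0 Q]; norm_num
      have h2 : ((0 : ℕ) : ℝ) + 1 = 1 := by norm_num
      rw [h2, one_pow]
      have h3 : -((0:ℕ) : ℝ) * sInf S = 0 := by norm_num
      rw [h3, Real.rpow_zero, one_mul]
      exact h1
    · set c : (Fin n → U × V) → (U × V → ℕ) :=
        fun w => (fun a => (Finset.univ.filter (fun i => w i = a)).card) with hcdef
      rw [hTw, ← Finset.sum_fiberwise_of_maps_to
        (fun w (hw : w ∈ B) => Finset.mem_image_of_mem c hw) (fun w => ∏ i, Q (w i))]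
      have inner : ∀ t ∈ B.image c,
          ∑ w ∈ B.filter (fun w => c w = t), ∏ i, Q (w i)
            ≤ (2:ℝ) ^ (-(n : ℝ) * sInf S) := by
        intro t htmem
        obtain ⟨w₀, hw₀B, hw₀t⟩ := Finset.mem_image.1 htmem
        have hC : Typical μ (margU P) (fun i => (w₀ i).1) ∧
            Typical μ (margV P) (fun i => (w₀ i).2) := (Finset.mem_filter.1 hw₀B).2
        have htsum : ∑ a, t a = n := by rw [← hw₀t]; exact sum_count w₀
        have hta : ∀ a, t a ≤ n := by
          intro a
          rw [← htsum]
          exact Finset.single_le_sum (fun a _ => Nat.zero_le (t a)) (Finset.mem_univ a)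
        have hmem : klDiv2 (fun a => (t a : ℝ) / n) Q ∈ S := by
          refine ⟨fun a => (t a : ℝ) / n, ⟨fun a => by positivity, ?_⟩, ?_, ?_, rfl⟩
          · rw [← Finset.sum_div, ← Nat.cast_sum, htsum]
            field_simp
          · intro x
            have hm : margU (fun a => (t a : ℝ) / n) x = empFreq (fun i => (w₀ i).1) x := by
              unfold margU empFreq
              rw [← Finset.sum_div]
              congr 1
              rw [card_filter_fst w₀ x]
              push_cast
              apply Finset.sum_congr rfl
              intro b _
              rw [← congrFun hw₀t (x, b)]
            rw [hm]
            rcases eq_or_ne (margU P x) 0 with h0 | h0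
            · rw [(hC.1 x).1 h0, h0]
              simpa using le_of_lt hμ
            · exact (hC.1 x).2 h0
          · intro x
            have hm : margV (fun a => (t a : ℝ) / n) x = empFreq (fun i => (w₀ i).2) x := by
              unfold margV empFreq
              rw [← Finset.sum_div]
              congr 1
              rw [card_filter_snd w₀ x]
              push_cast
              apply Finset.sum_congr rfl
              intro b _
              rw [← congrFun hw₀t (b, x)]
            rw [hm]
            rcases eq_or_ne (margV P x) 0 with h0 | h0
            · rw [(hC.2 x).1 h0, h0]
              simpa using le_of_lt hμ
            · exact (hC.2 x).2 h0
        calc ∑ w ∈ B.filter (fun w => c w = t), ∏ i, Q (w i)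
            ≤ ∑ w ∈ Finset.univ.filter (fun w : Fin n → U × V =>
                (fun a => (Finset.univ.filter (fun i => w i = a)).card) = t), ∏ i, Q (w i) := by
              apply Finset.sum_le_sum_of_subset_of_nonneg
              · intro w hw
                rw [Finset.mem_filter] at hw ⊢
                exact ⟨Finset.mem_univ w, hw.2⟩
              · intro w _ _
                exact Finset.prod_nonneg fun i _ => (hQpos _).le
          _ ≤ (2:ℝ) ^ (-(n : ℝ) * klDiv2 (fun a => (t a : ℝ) / n) Q) :=
              typeclass_bound hn Q hQpos t htsum
          _ ≤ (2:ℝ) ^ (-(n : ℝ) * sInf S) := by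
              apply Real.rpow_le_rpow_of_exponent_le one_le_two
              exact mul_le_mul_of_nonpos_left (csInf_le hbdd hmem)
                (by simp [Nat.cast_nonneg])
      calc ∑ t ∈ B.image c, ∑ w ∈ B.filter (fun w => c w = t), ∏ i, Q (w i)
          ≤ ∑ t ∈ B.image c, (2:ℝ) ^ (-(n : ℝ) * sInf S) := Finset.sum_le_sum inner
        _ = ((B.image c).card : ℝ) * (2:ℝ) ^ (-(n : ℝ) * sInf S) := by
            rw [Finset.sum_const, nsmul_eq_mul]
        _ ≤ ((n : ℝ) + 1) ^ (Fintype.card U * Fintype.card V) *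
            (2:ℝ) ^ (-(n : ℝ) * sInf S) := by
            apply mul_le_mul_of_nonneg_right _ hrpow_nn
            have hinj : ((B.image c).card : ℕ) ≤ Fintype.card (U × V → Fin (n + 1)) := by
              rw [← Finset.card_univ]
              apply Finset.card_le_card_of_injOn
                (fun t a => (⟨min (t a) n, by omega⟩ : Fin (n + 1)))
                (fun t _ => Finset.mem_univ _)
              intro t ht t' ht' heq
              have htle : ∀ a, t a ≤ n := by
                obtain ⟨w₀, _, hw₀t⟩ := Finset.mem_image.1 ht
                intro a
                have htsum : ∑ a, t a = n := by rw [← hw₀t]; exact sum_count w₀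
                rw [← htsum]
                exact Finset.single_le_sum (fun a _ => Nat.zero_le (t a)) (Finset.mem_univ a)
              have htle' : ∀ a, t' a ≤ n := by
                obtain ⟨w₀, _, hw₀t⟩ := Finset.mem_image.1 ht'
                intro a
                have htsum : ∑ a, t' a = n := by rw [← hw₀t]; exact sum_count w₀
                rw [← htsum]
                exact Finset.single_le_sum (fun a _ => Nat.zero_le (t' a)) (Finset.mem_univ a)
              funext a
              have := congrFun heq a
              rw [Fin.mk.injEq, min_eq_left (htle a), min_eq_left (htle' a)] at this
              exact this
            have hcardfun : Fintype.card (U × V → Fin (n + 1))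
                = (n + 1) ^ (Fintype.card U * Fintype.card V) := by
              rw [Fintype.card_fun, Fintype.card_fin, Fintype.card_prod]
            rw [hcardfun] at hinj
            calc ((B.image c).card : ℝ)
                ≤ (((n + 1) ^ (Fintype.card U * Fintype.card V) : ℕ) : ℝ) := by
                  exact_mod_cast hinj
              _ = ((n : ℝ) + 1) ^ (Fintype.card U * Fintype.card V) := by push_cast; ring
end
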